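/- The multirelational diamond fails additivity: there exist a set X, a multirelation R, and subidentities P, Q such that ⟨R⟩(P ∪ Q) ≠ ⟨R⟩P ∪ ⟨R⟩Q. Concretely, R = {(a,{a,b})}, P = {(a,{a})}, Q = {(b,{b})} gives ⟨R⟩(P ∪ Q) = {(a,{a})} while ⟨R⟩P ∪ ⟨R⟩Q = ∅. -/
import Mathlib


open Set

/-- Sequential composition of multirelations (Peleg). -/
def mseq {X : Type*} (R S : Set (X × Set X)) : Set (X × Set X) :=
  {p | ∃ B, (p.1, B) ∈ R ∧ ∃ f : X → Set X, (∀ b ∈ B, (b, f b) ∈ S) ∧ p.2 = ⋃ b ∈ B, f b}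

/-- The unit of sequential composition. -/
def sunit (X : Type*) : Set (X × Set X) := {p | p.2 = {p.1}}

/-- Parallel (concurrent) composition of multirelations. -/
def mpar {X : Type*} (R S : Set (X × Set X)) : Set (X × Set X) :=
  {p | ∃ A B, (p.1, A) ∈ R ∧ (p.1, B) ∈ S ∧ p.2 = A ∪ B}

/-- The unit of parallel composition. -/
def punit (X : Type*) : Set (X × Set X) := {p | p.2 = (∅ : Set X)}

/-- Domain of a multirelation. -/
def mdom {X : Type*} (R : Set (X × Set X)) : Set (X × Set X) :=
  {p | p.2 = {p.1} ∧ ∃ A, (p.1, A) ∈ R}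

/-- Antidomain of a multirelation. -/
def mantidom {X : Type*} (R : Set (X × Set X)) : Set (X × Set X) :=
  {p | p.2 = {p.1} ∧ ¬ ∃ A, (p.1, A) ∈ R}

/-- Diamond operator. -/
def mdia {X : Type*} (R P : Set (X × Set X)) : Set (X × Set X) := mdom (mseq R P)

theorem stmt16 {X : Type*} (a b : X) (hab : a ≠ b) :
    mdia ({(a, ({a, b} : Set X))} : Set (X × Set X))
         (({(a, ({a} : Set X))} : Set (X × Set X)) ∪ {(b, ({b} : Set X))})
      = ({(a, ({a} : Set X))} : Set (X × Set X)) ∧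
    mdia ({(a, ({a, b} : Set X))} : Set (X × Set X)) {(a, ({a} : Set X))} ∪
    mdia ({(a, ({a, b} : Set X))} : Set (X × Set X)) {(b, ({b} : Set X))} = ∅ ∧
    mdia ({(a, ({a, b} : Set X))} : Set (X × Set X))
         (({(a, ({a} : Set X))} : Set (X × Set X)) ∪ {(b, ({b} : Set X))}) ≠
    mdia ({(a, ({a, b} : Set X))} : Set (X × Set X)) {(a, ({a} : Set X))} ∪
    mdia ({(a, ({a, b} : Set X))} : Set (X × Set X)) {(b, ({b} : Set X))} := by
  have h1 : mdia ({(a, ({a, b} : Set X))} : Set (X × Set X))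
         (({(a, ({a} : Set X))} : Set (X × Set X)) ∪ {(b, ({b} : Set X))})
      = ({(a, ({a} : Set X))} : Set (X × Set X)) := by
    ext ⟨x, A⟩
    simp only [mdia, mdom, mseq, Set.mem_setOf_eq, Set.mem_singleton_iff,
      Set.mem_union, Prod.mk.injEq]
    constructor
    · rintro ⟨hA, A', B, ⟨hx, hB⟩, f, hf, -⟩
      exact ⟨hx, by rw [hA, hx]⟩
    · rintro ⟨hx, hA⟩
      subst hx
      refine ⟨by rw [hA], ⋃ y ∈ ({x, b} : Set X), ({y} : Set X), ({x, b} : Set X),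
        ⟨rfl, rfl⟩, fun y => {y}, ?_, rfl⟩
      rintro y (rfl | rfl)
      · exact Or.inl ⟨rfl, rfl⟩
      · exact Or.inr ⟨rfl, rfl⟩
  have h2 : mdia ({(a, ({a, b} : Set X))} : Set (X × Set X)) {(a, ({a} : Set X))} ∪
      mdia ({(a, ({a, b} : Set X))} : Set (X × Set X)) {(b, ({b} : Set X))} = ∅ := by
    ext ⟨x, A⟩
    simp only [mdia, mdom, mseq, Set.mem_union, Set.mem_setOf_eq,
      Set.mem_singleton_iff, Prod.mk.injEq, Set.mem_empty_iff_false, iff_false]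
    rintro (⟨-, A', B, ⟨hx, hB⟩, f, hf, -⟩ | ⟨-, A', B, ⟨hx, hB⟩, f, hf, -⟩)
    · subst hB
      exact hab ((hf b (Or.inr rfl)).1.symm)
    · subst hB
      exact hab (hf a (Or.inl rfl)).1
  refine ⟨h1, h2, ?_⟩
  rw [h1, h2]
  exact Set.singleton_ne_empty _
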